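/- Let p be prime and n coprime to p. Then every cyclic code of length n over R_k = Z_p[u]/(u^k) is a principal ideal in R_k[x]/(x^n - 1). -/

import Mathlib

open Polynomial

noncomputable section

/-- `Ru p k` is the ring `R_k = Z_p[u]/(u^k)`. -/
abbrev Ru (p k : ℕ) : Type := Polynomial (ZMod p) ⧸ Ideal.span {(X : Polynomial (ZMod p)) ^ k}

instance instCommRingRu (p k : ℕ) : CommRing (Ru p k) := Ideal.Quotient.commRing _

/-- The element `u` of `Ru p k`. -/
abbrev uR (p k : ℕ) : Ru p k := Ideal.Quotient.mk _ (X : Polynomial (ZMod p))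

/-- `Rn p k n` is the ring `R_k[x]/(x^n - 1)`; its ideals are the cyclic codes of length `n`. -/
abbrev Rn (p k n : ℕ) : Type :=
  Polynomial (Ru p k) ⧸ Ideal.span {(X : Polynomial (Ru p k)) ^ n - 1}

/-- The natural ring map `Z_p[x] → R_k[x]/(x^n - 1)`. -/
abbrev liftP (p k n : ℕ) : Polynomial (ZMod p) →+* Rn p k n :=
  (Ideal.Quotient.mk _).comp (mapRingHom (algebraMap (ZMod p) (Ru p k)))

/-- `u` as an element of `R_k[x]/(x^n - 1)`. -/
abbrev uu (p k n : ℕ) : Rn p k n := Ideal.Quotient.mk _ (C (uR p k))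

/-- `x` as an element of `R_k[x]/(x^n - 1)`. -/
abbrev xx (p k n : ℕ) : Rn p k n := Ideal.Quotient.mk _ (X : Polynomial (Ru p k))

namespace Stmt15Aux

@[reducible] def rnCommRing (p k n : ℕ) : CommRing (Rn p k n) := Ideal.Quotient.commRing _

@[reducible] def rnSemiring (p k n : ℕ) : Semiring (Rn p k n) := CommSemiring.toSemiring

attribute [local instance] rnCommRing rnSemiring


/-- A ring with a nilpotent element `t` whose quotient by `(t)` is "a field"
(every element outside `(t)` is invertible mod `(t)`) has all ideals principal. -/
theorem principal_of_nilpotent {R : Type*} [CommRing R] (t : R) (k : ℕ) (htk : t ^ k = 0)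
    (hf : ∀ a : R, a ∉ Ideal.span {t} → ∃ b : R, a * b - 1 ∈ Ideal.span {t}) :
    ∀ I : Ideal R, ∃ c : R, I = Ideal.span {c} := by
  have hunit : ∀ a : R, a ∉ Ideal.span {t} → IsUnit a := by
    intro a ha
    obtain ⟨b, hb⟩ := hf a ha
    obtain ⟨c, hc⟩ := Ideal.mem_span_singleton'.mp hb
    have hab : a * b = 1 + c * t := by rw [hc]; ring
    have hnil : IsNilpotent (c * t) := ⟨k, by rw [mul_pow, htk, mul_zero]⟩
    have hu : IsUnit (a * b) := hab ▸ hnil.isUnit_one_add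
    exact isUnit_of_mul_isUnit_left hu
  have key : ∀ m : ℕ, m ≤ k → ∀ I : Ideal R, I ≤ Ideal.span {t ^ (k - m)} →
      ∃ c : R, I = Ideal.span {c} := by
    intro m
    induction m with
    | zero =>
      intro _ I hI
      have hb : I ≤ ⊥ := by
        intro x hx
        have h1 := hI hx
        rwa [Nat.sub_zero, htk, Ideal.span_singleton_eq_bot.mpr rfl] at h1
      exact ⟨0, by rw [Ideal.span_singleton_eq_bot.mpr rfl]; exact le_bot_iff.mp hb⟩
    | succ m ih =>
      intro hm I hI
      by_cases hcase : I ≤ Ideal.span {t ^ (k - m)}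
      · exact ih (Nat.le_of_succ_le hm) I hcase
      · obtain ⟨a, haI, ha⟩ := SetLike.not_le_iff_exists.mp hcase
        obtain ⟨c, hc⟩ := Ideal.mem_span_singleton'.mp (hI haI)
        have he : k - m = (k - (m + 1)) + 1 := by omega
        have hcu : IsUnit c := by
          apply hunit
          intro hcmem
          obtain ⟨d, hd⟩ := Ideal.mem_span_singleton'.mp hcmem
          apply ha
          refine Ideal.mem_span_singleton'.mpr ⟨d, ?_⟩
          rw [he, pow_succ]
          calc d * (t ^ (k - (m + 1)) * t) = d * t * t ^ (k - (m + 1)) := by ring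
            _ = c * t ^ (k - (m + 1)) := by rw [hd]
            _ = a := hc
        obtain ⟨u, hu⟩ := hcu
        refine ⟨t ^ (k - (m + 1)), le_antisymm hI ?_⟩
        rw [Ideal.span_singleton_le_iff_mem]
        have : t ^ (k - (m + 1)) = (↑u⁻¹ : R) * a := by
          rw [← hc, ← hu, ← mul_assoc, Units.inv_mul, one_mul]
        rw [this]
        exact Ideal.mul_mem_left _ _ haI
  intro I
  refine key k le_rfl I ?_
  simp

/-- A finite product of rings with all ideals principal has all ideals principal. -/
theorem pi_principal {ι : Type*} [Fintype ι] [DecidableEq ι] {R : ι → Type*}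
    [∀ i, CommRing (R i)]
    (h : ∀ i, ∀ I : Ideal (R i), ∃ c : R i, I = Ideal.span {c}) (I : Ideal (∀ i, R i)) :
    ∃ c : ∀ i, R i, I = Ideal.span {c} := by
  have hsurj : ∀ i, Function.Surjective (Pi.evalRingHom R i) := by
    intro i x
    exact ⟨Pi.single i x, Pi.single_eq_same i x⟩
  choose c hc using fun i => h i (I.map (Pi.evalRingHom R i))
  have hmem : ∀ i, ∃ y, y ∈ I ∧ Pi.evalRingHom R i y = c i := by
    intro i
    have hci : c i ∈ I.map (Pi.evalRingHom R i) := by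
      rw [hc i]; exact Ideal.mem_span_singleton_self _
    exact Ideal.mem_map_iff_of_surjective _ (hsurj i) |>.mp hci
  choose y hyI hy using hmem
  set z : ∀ i, R i := ∑ i, Pi.single i 1 * y i with hz
  have hzI : z ∈ I := Ideal.sum_mem _ fun i _ => I.mul_mem_left _ (hyI i)
  have hzj : ∀ j, z j = c j := by
    intro j
    rw [hz, Finset.sum_apply, Finset.sum_eq_single j]
    · rw [Pi.mul_apply, Pi.single_eq_same, one_mul]
      exact hy j
    · intro i _ hij
      rw [Pi.mul_apply, Pi.single_eq_of_ne hij.symm, zero_mul]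
    · intro habs
      exact absurd (Finset.mem_univ j) habs
  refine ⟨z, le_antisymm ?_ ((Ideal.span_singleton_le_iff_mem _).mpr hzI)⟩
  intro x hx
  have hxj : ∀ j, ∃ d : R j, x j = d * z j := by
    intro j
    have hxm : x j ∈ I.map (Pi.evalRingHom R j) := Ideal.mem_map_of_mem _ hx
    rw [hc j] at hxm
    obtain ⟨d, hd⟩ := Ideal.mem_span_singleton'.mp hxm
    exact ⟨d, by rw [hzj, ← hd]⟩
  choose d hd using hxj
  exact Ideal.mem_span_singleton'.mpr ⟨d, by funext j; exact (hd j).symm⟩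

/-- Principality of all ideals transfers along surjective ring homs. -/
theorem transfer {A B : Type*} [CommRing A] [CommRing B]
    (h : ∀ I : Ideal A, ∃ c : A, I = Ideal.span {c}) (f : A →+* B)
    (hf : Function.Surjective f) (I : Ideal B) : ∃ c : B, I = Ideal.span {c} := by
  obtain ⟨c, hc⟩ := h (I.comap f)
  refine ⟨f c, ?_⟩
  rw [← Ideal.map_comap_of_surjective f hf I, hc, Ideal.map_span]
  simp


set_option maxHeartbeats 1000000 in
set_option synthInstance.maxHeartbeats 400000 in
theorem stmt15' (p k n : ℕ) (hp : p.Prime) (hk : 1 ≤ k) (hn : 0 < n)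
    (hco : Nat.Coprime n p) (Ck : Ideal (Rn p k n)) :
    ∃ c : Rn p k n, Ck = Ideal.span {c} := by
  classical
  haveI : Fact p.Prime := ⟨hp⟩
  have hk0 : k ≠ 0 := by omega
  -- the polynomial x^n - 1 over Z_p
  set g : Polynomial (ZMod p) := X ^ n - 1 with hgdef
  have hgC : g = X ^ n - C 1 := by rw [hgdef, map_one]
  have hgmonic : g.Monic := by rw [hgC]; exact monic_X_pow_sub_C 1 hn.ne'
  have hg0 : g ≠ 0 := hgmonic.ne_zero
  have hn' : (n : ZMod p) ≠ 0 := by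
    rw [Ne, ZMod.natCast_eq_zero_iff]
    intro hdvd
    have h1 : p ∣ Nat.gcd n p := Nat.dvd_gcd hdvd dvd_rfl
    rw [hco] at h1
    exact hp.one_lt.ne' (Nat.dvd_one.mp h1)
  have hsq : Squarefree g := by
    rw [hgC]
    exact (separable_X_pow_sub_C 1 hn' one_ne_zero).squarefree
  -- the irreducible factors
  set fs := UniqueFactorizationMonoid.normalizedFactors g with hfs
  have hnodup : fs.Nodup :=
    (UniqueFactorizationMonoid.squarefree_iff_nodup_normalizedFactors hg0).mp hsq
  set l := fs.toList with hl
  have hlnodup : l.Nodup := by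
    have h := hnodup
    rwa [← fs.coe_toList, Multiset.coe_nodup] at h
  set ι := Fin l.length with hι
  set F : ι → Polynomial (ZMod p) := fun i => l.get i with hF
  have hFmem : ∀ i, F i ∈ fs := by
    intro i
    rw [← Multiset.mem_toList]
    exact l.get_mem i
  have hirr : ∀ i, Irreducible (F i) := fun i =>
    UniqueFactorizationMonoid.irreducible_of_normalized_factor _ (hFmem i)
  have hnorm : ∀ i, normalize (F i) = F i := fun i =>
    UniqueFactorizationMonoid.normalize_normalized_factor _ (hFmem i)
  have hdvd : ∀ i, F i ∣ g := fun i =>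
    UniqueFactorizationMonoid.dvd_of_mem_normalizedFactors (hFmem i)
  have hFinj : Function.Injective F := List.nodup_iff_injective_get.mp hlnodup
  have hcopF : ∀ i j, i ≠ j → IsCoprime (F i) (F j) := by
    intro i j hij
    have hne : F i ≠ F j := fun h => hij (hFinj h)
    haveI hM1 := PrincipalIdealRing.isMaximal_of_irreducible (hirr i)
    haveI hM2 := PrincipalIdealRing.isMaximal_of_irreducible (hirr j)
    have hsne : Ideal.span {F i} ≠ Ideal.span {F j} := by
      intro hEq
      have hass : Associated (F i) (F j) := Ideal.span_singleton_eq_span_singleton.mp hEq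
      exact hne (by rw [← hnorm i, ← hnorm j]
                    exact normalize_eq_normalize hass.dvd hass.symm.dvd)
    exact (Ideal.isCoprime_span_singleton_iff _ _).mp
      (Ideal.isCoprime_iff_sup_eq.mpr (Ideal.IsMaximal.coprime_of_ne hM1 hM2 hsne))
  -- mapping to Rn
  set φ := liftP p k n with hφ
  have hφmk : ∀ P : Polynomial (ZMod p),
      φ P = Ideal.Quotient.mk _ (P.map (algebraMap (ZMod p) (Ru p k))) := fun P => rfl
  have hφg : φ g = 0 := by
    rw [hφmk, Ideal.Quotient.eq_zero_iff_mem]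
    have hmap : g.map (algebraMap (ZMod p) (Ru p k)) = X ^ n - 1 := by
      rw [hgdef]; simp
    rw [hmap]
    exact Ideal.subset_span rfl
  set J : ι → Ideal (Rn p k n) := fun i => Ideal.span {φ (F i)} with hJ
  have hcopφ : ∀ i j, i ≠ j → IsCoprime (φ (F i)) (φ (F j)) := fun i j hij =>
    (hcopF i j hij).map (S := Rn p k n) φ
  have hcopJ : Pairwise (Function.onFun IsCoprime J) := fun i j hij =>
    (Ideal.isCoprime_span_singleton_iff _ _).mpr (hcopφ i j hij)
  have hinf : (⨅ i, J i) = ⊥ := by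
    have h1 : (⨅ i, J i) = Ideal.span {∏ i, φ (F i)} := Ideal.iInf_span_singleton hcopφ
    have h2 : (∏ i, φ (F i)) = φ (∏ i, F i) := (map_prod φ F Finset.univ).symm
    have h3 : (∏ i, F i) = fs.prod := by
      rw [← Multiset.prod_toList, ← hl, ← Fin.prod_univ_getElem l]
      rfl
    obtain ⟨w, hw⟩ := UniqueFactorizationMonoid.prod_normalizedFactors hg0
    have hw' : fs.prod * (↑w : Polynomial (ZMod p)) = g := hw
    have h6 : φ fs.prod * φ (↑w : Polynomial (ZMod p)) = 0 := by
      rw [← map_mul, hw', hφg]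
    have h7 : φ fs.prod = 0 :=
      (IsUnit.mul_left_eq_zero ((Units.isUnit w).map φ)).mp h6
    rw [h1, h2, h3, h7]
    simp
  -- the element ε : Ru → Z_p, evaluation at u = 0
  set ε : Ru p k →+* ZMod p := Ideal.Quotient.lift _ (evalRingHom (0 : ZMod p)) (by
    intro a ha
    obtain ⟨c, hc⟩ := Ideal.mem_span_singleton'.mp ha
    rw [← hc]
    simp [zero_pow hk0]) with hε
  have hεmk : ∀ P : Polynomial (ZMod p), ε (Ideal.Quotient.mk _ P) = P.eval 0 := by
    intro P
    rw [hε]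
    exact Ideal.Quotient.lift_mk _ _ _
  have hεalg : ∀ c : ZMod p, ε (algebraMap (ZMod p) (Ru p k) c) = c := by
    intro c
    have : algebraMap (ZMod p) (Ru p k) c = Ideal.Quotient.mk _ (C c) := rfl
    rw [this, hεmk, eval_C]
  -- key decomposition lemmas
  have hK1 : ∀ a : Ru p k, a - algebraMap (ZMod p) (Ru p k) (ε a) ∈ Ideal.span {uR p k} := by
    intro a
    obtain ⟨P, rfl⟩ := Ideal.Quotient.mk_surjective a
    rw [hεmk]
    have halg : algebraMap (ZMod p) (Ru p k) (P.eval 0) = Ideal.Quotient.mk _ (C (P.eval 0)) := rfl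
    rw [halg, ← map_sub]
    obtain ⟨Q, hQ⟩ : (X : Polynomial (ZMod p)) ∣ P - C (P.eval 0) := by
      rw [X_dvd_iff]
      simp [coeff_zero_eq_eval_zero]
    rw [hQ, map_mul]
    exact Ideal.mem_span_singleton'.mpr ⟨Ideal.Quotient.mk _ Q, mul_comm _ _⟩
  have hK2 : ∀ q : Polynomial (Ru p k),
      q - (q.map ε).map (algebraMap (ZMod p) (Ru p k)) ∈ Ideal.span {C (uR p k)} := by
    intro q
    set r := q - (q.map ε).map (algebraMap (ZMod p) (Ru p k)) with hr
    have hcoeff : ∀ j, r.coeff j ∈ Ideal.span {uR p k} := by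
      intro j
      rw [hr, coeff_sub, coeff_map, coeff_map]
      exact hK1 _
    rw [r.as_sum_support]
    refine Ideal.sum_mem _ fun j _ => ?_
    obtain ⟨d, hd⟩ := Ideal.mem_span_singleton'.mp (hcoeff j)
    rw [← hd]
    exact Ideal.mem_span_singleton'.mpr ⟨monomial j d, monomial_mul_C⟩
  -- each quotient Rn / J i has all ideals principal
  have hQprin : ∀ i, ∀ I : Ideal (Rn p k n ⧸ J i), ∃ c, I = Ideal.span {c} := by
    intro i
    haveI hmax : (Ideal.span {F i}).IsMaximal :=
      PrincipalIdealRing.isMaximal_of_irreducible (hirr i)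
    letI : Field (Polynomial (ZMod p) ⧸ Ideal.span {F i}) := Ideal.Quotient.field _
    set ψ0 : Polynomial (Ru p k) →+* Polynomial (ZMod p) ⧸ Ideal.span {F i} :=
      (Ideal.Quotient.mk _).comp (mapRingHom ε) with hψ0def
    have hψ0 : ∀ Q ∈ Ideal.span {(X : Polynomial (Ru p k)) ^ n - 1}, ψ0 Q = 0 := by
      intro Q hQ
      obtain ⟨c, hc⟩ := Ideal.mem_span_singleton'.mp hQ
      rw [← hc, hψ0def]
      simp only [RingHom.comp_apply, coe_mapRingHom, Polynomial.map_mul]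
      rw [Ideal.Quotient.eq_zero_iff_mem]
      have hmap : ((X : Polynomial (Ru p k)) ^ n - 1).map ε = g := by
        rw [hgdef]; simp
      rw [hmap]
      exact Ideal.mul_mem_left _ _ (Ideal.mem_span_singleton.mpr (hdvd i))
    set ψ : Rn p k n →+* Polynomial (ZMod p) ⧸ Ideal.span {F i} :=
      Ideal.Quotient.lift _ ψ0 hψ0 with hψdef
    have hψmk : ∀ Q : Polynomial (Ru p k),
        ψ (Ideal.Quotient.mk _ Q) = Ideal.Quotient.mk (Ideal.span {F i}) (Q.map ε) := by
      intro Q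
      rw [hψdef]
      exact Ideal.Quotient.lift_mk _ _ _
    have hψsurj : Function.Surjective ψ := by
      intro y
      obtain ⟨P, rfl⟩ := Ideal.Quotient.mk_surjective y
      refine ⟨Ideal.Quotient.mk _ (P.map (algebraMap (ZMod p) (Ru p k))), ?_⟩
      rw [hψmk, Polynomial.map_map]
      congr 1
      have : ε.comp (algebraMap (ZMod p) (Ru p k)) = RingHom.id _ := by
        ext c
        · simp [hεalg]
      rw [this, Polynomial.map_id]
    have hker : ∀ z : Rn p k n, ψ z = 0 → z ∈ J i ⊔ Ideal.span {uu p k n} := by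
      intro z hz
      obtain ⟨q, rfl⟩ := Ideal.Quotient.mk_surjective z
      rw [hψmk, Ideal.Quotient.eq_zero_iff_mem] at hz
      obtain ⟨a, ha⟩ := Ideal.mem_span_singleton'.mp hz
      obtain ⟨cq, hcq⟩ := Ideal.mem_span_singleton'.mp (hK2 q)
      have hqeq : q = (q.map ε).map (algebraMap (ZMod p) (Ru p k)) + cq * C (uR p k) := by
        rw [hcq]; ring
      have hsplit : Ideal.Quotient.mk (Ideal.span {(X : Polynomial (Ru p k)) ^ n - 1}) q
          = φ a * φ (F i) + Ideal.Quotient.mk _ cq * uu p k n := by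
        conv_lhs => rw [hqeq]
        rw [map_add, map_mul, ← ha, Polynomial.map_mul, map_mul, hφmk, hφmk]
      rw [hsplit]
      refine Ideal.add_mem _ (Ideal.mem_sup_left ?_) (Ideal.mem_sup_right ?_)
      · exact Ideal.mem_span_singleton'.mpr ⟨φ a, rfl⟩
      · exact Ideal.mem_span_singleton'.mpr ⟨Ideal.Quotient.mk _ cq, rfl⟩
    have huk : (uu p k n) ^ k = 0 := by
      have hu : (uR p k) ^ k = 0 := by
        rw [← map_pow, Ideal.Quotient.eq_zero_iff_mem]
        exact Ideal.subset_span rfl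
      show (Ideal.Quotient.mk _ (C (uR p k))) ^ k = 0
      rw [← map_pow, ← C_pow, hu, map_zero, map_zero]
    set t : Rn p k n ⧸ J i := Ideal.Quotient.mk _ (uu p k n) with ht
    have hspan_t : Ideal.span {t} = (Ideal.span {uu p k n}).map (Ideal.Quotient.mk (J i)) := by
      rw [Ideal.map_span]
      simp [ht]
    apply principal_of_nilpotent t k
    · rw [ht, ← map_pow, huk, map_zero]
    · intro a hat
      obtain ⟨z, rfl⟩ := Ideal.Quotient.mk_surjective a
      have hz : z ∉ J i ⊔ Ideal.span {uu p k n} := by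
        intro hmem
        apply hat
        rw [hspan_t, Ideal.mem_quotient_iff_mem_sup, sup_comm]
        exact hmem
      have hψz : ψ z ≠ 0 := fun h0 => hz (hker z h0)
      obtain ⟨w, hw⟩ := hψsurj (ψ z)⁻¹
      refine ⟨Ideal.Quotient.mk _ w, ?_⟩
      have hmem : z * w - 1 ∈ J i ⊔ Ideal.span {uu p k n} := by
        apply hker
        rw [map_sub, map_mul, hw, map_one, mul_inv_cancel₀ hψz, sub_self]
      have h3 : Ideal.Quotient.mk (J i) (z * w - 1) ∈ Ideal.span {t} := by
        rw [hspan_t, Ideal.mem_quotient_iff_mem_sup, sup_comm]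
        exact hmem
      simpa using h3
  -- assemble via CRT
  have hpi := pi_principal (R := fun i => Rn p k n ⧸ J i) hQprin
  set E : (∀ i, Rn p k n ⧸ J i) ≃+* Rn p k n :=
    (Ideal.quotientInfRingEquivPiQuotient J hcopJ).symm.trans
      ((Ideal.quotEquivOfEq hinf).trans (RingEquiv.quotientBot _)) with hE
  exact transfer hpi (E : (∀ i, Rn p k n ⧸ J i) →+* Rn p k n) E.surjective Ck

end Stmt15Aux

/-- If `gcd(n, p) = 1`, every cyclic code of length `n` over
`R_k = Z_p[u]/(u^k)`, i.e. every ideal of `R_k[x]/(x^n - 1)`, is principal. -/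


theorem stmt15 (p k n : ℕ) (hp : p.Prime) (hk : 1 ≤ k) (hn : 0 < n)
    (hco : Nat.Coprime n p) (Ck : Ideal (Rn p k n)) :
    ∃ c : Rn p k n, Ck = Ideal.span {c} :=
  Stmt15Aux.stmt15' p k n hp hk hn hco Ck
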